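/- Let α > β > γ > 0 be reals, let f₁,g₁,h₁,f₂,g₂,h₂ : ℤ → ℝ satisfy the discrete functional equations, and let r : ℤ×ℤ → ℝ³ be the associated discrete ellipsoid binet. Then all pairs of dual edges are orthogonal: for every (m₁,m₂) ∈ ℤ², the inner product of r(m₁+1,m₂) − r(m₁−1,m₂) with r(m₁,m₂+1) − r(m₁,m₂−1) is zero. (Together with planarity of elementary quadrilaterals this says that r is a principal binet.) -/

import Mathlib

open Real

noncomputable def pt (x y z : ℝ) : EuclideanSpace ℝ (Fin 3) :=
  (WithLp.equiv 2 (Fin 3 → ℝ)).symm ![x, y, z]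

theorem binet_dual_edges_orthogonal
    (α β γ : ℝ) (hαβ : β < α) (hβγ : γ < β) (hγ : 0 < γ)
    (f₁ g₁ h₁ f₂ g₂ h₂ : ℤ → ℝ)
    (hfe₁ : ∀ m : ℤ, f₁ m * f₁ (m + 1) + g₁ m * g₁ (m + 1) = α - β)
    (hfe₂ : ∀ m : ℤ, f₁ m * f₁ (m + 1) + h₁ m * h₁ (m + 1) = α - γ)
    (hfe₃ : ∀ m : ℤ, f₂ m * f₂ (m + 1) - g₂ m * g₂ (m + 1) = α - β)
    (hfe₄ : ∀ m : ℤ, f₂ m * f₂ (m + 1) + h₂ m * h₂ (m + 1) = α - γ)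
    (r : ℤ → ℤ → EuclideanSpace ℝ (Fin 3))
    (hr : ∀ m₁ m₂ : ℤ, r m₁ m₂ =
      pt (Real.sqrt (α / ((α - β) * (α - γ))) * f₁ m₁ * f₂ m₂)
        (Real.sqrt (β / ((α - β) * (β - γ))) * g₁ m₁ * g₂ m₂)
        (Real.sqrt (γ / ((α - γ) * (β - γ))) * h₁ m₁ * h₂ m₂))
    (m₁ m₂ : ℤ) :
    (inner ℝ (r (m₁ + 1) m₂ - r (m₁ - 1) m₂)
      (r m₁ (m₂ + 1) - r m₁ (m₂ - 1)) : ℝ) = 0 := by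
  have hab : (0:ℝ) < α - β := by linarith
  have hag : (0:ℝ) < α - γ := by linarith
  have hbg : (0:ℝ) < β - γ := by linarith
  have hα : (0:ℝ) < α := by linarith
  have hβ : (0:ℝ) < β := by linarith
  have hA : 0 ≤ α / ((α - β) * (α - γ)) := by positivity
  have hB : 0 ≤ β / ((α - β) * (β - γ)) := by positivity
  have hC : 0 ≤ γ / ((α - γ) * (β - γ)) := by positivity
  have hsA : Real.sqrt (α / ((α - β) * (α - γ))) * Real.sqrt (α / ((α - β) * (α - γ)))
      = α / ((α - β) * (α - γ)) := Real.mul_self_sqrt hA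
  have hsB : Real.sqrt (β / ((α - β) * (β - γ))) * Real.sqrt (β / ((α - β) * (β - γ)))
      = β / ((α - β) * (β - γ)) := Real.mul_self_sqrt hB
  have hsC : Real.sqrt (γ / ((α - γ) * (β - γ))) * Real.sqrt (γ / ((α - γ) * (β - γ)))
      = γ / ((α - γ) * (β - γ)) := Real.mul_self_sqrt hC
  have hsum : α / ((α - β) * (α - γ)) - β / ((α - β) * (β - γ))
      + γ / ((α - γ) * (β - γ)) = 0 := by
    field_simp
    ring
  have hm1 : m₁ - 1 + 1 = m₁ := by ring
  have hm2 : m₂ - 1 + 1 = m₂ := by ring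
  have h1 := hfe₁ m₁
  have h1' := hfe₁ (m₁ - 1); rw [hm1] at h1'
  have h2 := hfe₂ m₁
  have h2' := hfe₂ (m₁ - 1); rw [hm1] at h2'
  have h3 := hfe₃ m₂
  have h3' := hfe₃ (m₂ - 1); rw [hm2] at h3'
  have h4 := hfe₄ m₂
  have h4' := hfe₄ (m₂ - 1); rw [hm2] at h4'
  have eG1 : g₁ m₁ * (g₁ (m₁ + 1) - g₁ (m₁ - 1))
      = -(f₁ m₁ * (f₁ (m₁ + 1) - f₁ (m₁ - 1))) := by linear_combination h1 - h1'
  have eH1 : h₁ m₁ * (h₁ (m₁ + 1) - h₁ (m₁ - 1))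
      = -(f₁ m₁ * (f₁ (m₁ + 1) - f₁ (m₁ - 1))) := by linear_combination h2 - h2'
  have eG2 : g₂ m₂ * (g₂ (m₂ + 1) - g₂ (m₂ - 1))
      = f₂ m₂ * (f₂ (m₂ + 1) - f₂ (m₂ - 1)) := by linear_combination h3' - h3
  have eH2 : h₂ m₂ * (h₂ (m₂ + 1) - h₂ (m₂ - 1))
      = -(f₂ m₂ * (f₂ (m₂ + 1) - f₂ (m₂ - 1))) := by linear_combination h4 - h4'
  rw [hr, hr, hr, hr]
  simp only [pt, PiLp.inner_apply, Fin.sum_univ_three, WithLp.equiv_symm_apply, WithLp.ofLp_toLp,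
    PiLp.sub_apply, Matrix.cons_val_zero, Matrix.cons_val_one, Matrix.head_cons,
    Matrix.cons_val_two, Matrix.tail_cons, RCLike.inner_apply, conj_trivial]
  set sa := Real.sqrt (α / ((α - β) * (α - γ)))
  set sb := Real.sqrt (β / ((α - β) * (β - γ)))
  set sc := Real.sqrt (γ / ((α - γ) * (β - γ)))
  linear_combination
    (f₁ m₁ * (f₁ (m₁ + 1) - f₁ (m₁ - 1)) * (f₂ m₂ * (f₂ (m₂ + 1) - f₂ (m₂ - 1)))) * hsA
    + (g₁ m₁ * (g₁ (m₁ + 1) - g₁ (m₁ - 1)) * (g₂ m₂ * (g₂ (m₂ + 1) - g₂ (m₂ - 1)))) * hsB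
    + (h₁ m₁ * (h₁ (m₁ + 1) - h₁ (m₁ - 1)) * (h₂ m₂ * (h₂ (m₂ + 1) - h₂ (m₂ - 1)))) * hsC
    + (β / ((α - β) * (β - γ)) * (g₂ m₂ * (g₂ (m₂ + 1) - g₂ (m₂ - 1)))) * eG1
    - (β / ((α - β) * (β - γ)) * (f₁ m₁ * (f₁ (m₁ + 1) - f₁ (m₁ - 1)))) * eG2
    + (γ / ((α - γ) * (β - γ)) * (h₂ m₂ * (h₂ (m₂ + 1) - h₂ (m₂ - 1)))) * eH1
    - (γ / ((α - γ) * (β - γ)) * (f₁ m₁ * (f₁ (m₁ + 1) - f₁ (m₁ - 1)))) * eH2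
    + (f₁ m₁ * (f₁ (m₁ + 1) - f₁ (m₁ - 1)) * (f₂ m₂ * (f₂ (m₂ + 1) - f₂ (m₂ - 1)))) * hsum
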